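/- arXiv:2106.02733 — 3 statements merged into one kernel-verified Lean document; each statement's English description precedes it below -/
import Mathlib

section
/- Let N_in = sN_out for a positive integer s, and let L be the N_out × N_in subsampling matrix L_{ij} = 1 if j = si and 0 otherwise (indices mod respective sizes). If κ_{s⁻¹} is the s-dilation of a kernel κ (i.e., κ_{s⁻¹}(si) = κ(i) and κ_{s⁻¹}(j) = 0 when s ∤ j), then the circulant convolution matrices satisfy K L = L K_{s⁻¹}. -/
open Matrix

set_option linter.unusedSectionVars false


variable (Nout s : ℕ) [NeZero Nout] [NeZero s] [NeZero (s * Nout)]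

def gg (k : ZMod Nout) : ZMod (s * Nout) := ((s * k.val : ℕ) : ZMod (s * Nout))

lemma val_gg (k : ZMod Nout) : (gg Nout s k).val = s * k.val := by
  rw [gg, ZMod.val_natCast, Nat.mod_eq_of_lt]
  exact (Nat.mul_lt_mul_left (NeZero.pos s)).mpr (ZMod.val_lt k)

lemma gg_inj : Function.Injective (gg Nout s) := by
  intro a b hab
  have := congrArg ZMod.val hab
  rw [val_gg, val_gg] at this
  exact ZMod.val_injective _ (Nat.eq_of_mul_eq_mul_left (NeZero.pos s) this)

lemma gg_sub (a b : ZMod Nout) : gg Nout s a - gg Nout s b = gg Nout s (a - b) := by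
  have h1 : ((Nout : ℤ)) ∣ (((a - b).val : ℤ) - ((a.val : ℤ) - (b.val : ℤ))) := by
    rw [← ZMod.intCast_zmod_eq_zero_iff_dvd]
    push_cast
    simp [ZMod.natCast_val, ZMod.cast_id]
  have h3 : (((((s * (a-b).val : ℕ) : ℤ) + ((s * b.val : ℕ) : ℤ) - ((s * a.val : ℕ):ℤ)) : ℤ) : ZMod (s*Nout)) = 0 := by
    rw [ZMod.intCast_zmod_eq_zero_iff_dvd]
    have he : (((s * (a-b).val : ℕ) : ℤ) + ((s * b.val : ℕ) : ℤ) - ((s * a.val : ℕ):ℤ)) = (s : ℤ) * (((a - b).val : ℤ) - ((a.val : ℤ) - (b.val : ℤ))) := by push_cast; ring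
    rw [he]
    push_cast
    exact mul_dvd_mul_left _ h1
  rw [sub_eq_iff_eq_add, gg, gg, gg]
  push_cast at h3 ⊢
  linear_combination -h3



/-- The N_out × N_in subsampling matrix by integer factor s (N_in = s·N_out):
L_{ij} = 1 if j = s·i and 0 otherwise (indices mod respective sizes). -/
def subsample (Nout s : ℕ) : Matrix (ZMod Nout) (ZMod (s * Nout)) ℂ :=
  fun i j => if j = ((s * i.val : ℕ) : ZMod (s * Nout)) then 1 else 0

/-- If κ_{s⁻¹} is the s-dilation of κ (κ_{s⁻¹}(si) = κ(i), zero at indices not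
divisible by s), then the circulant convolution matrices satisfy K L = L K_{s⁻¹}. -/
theorem dilation_intertwines_circulant (Nout s : ℕ)
    [NeZero Nout] [NeZero s] [NeZero (s * Nout)]
    (κ : ZMod Nout → ℂ) (κ' : ZMod (s * Nout) → ℂ)
    (hdil : ∀ i : ZMod Nout, κ' ((s * i.val : ℕ) : ZMod (s * Nout)) = κ i)
    (hzero : ∀ j : ZMod (s * Nout), ¬ (s ∣ j.val) → κ' j = 0) :
    Matrix.circulant κ * subsample Nout s = subsample Nout s * Matrix.circulant κ' := by
  have hdil' : ∀ i : ZMod Nout, κ' (gg Nout s i) = κ i := hdil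
  ext i j
  rw [Matrix.mul_apply, Matrix.mul_apply]
  have gdef : ∀ k : ZMod Nout, ((s * k.val : ℕ) : ZMod (s * Nout)) = gg Nout s k := fun _ => rfl
  simp only [subsample, Matrix.circulant_apply, gdef]
  have hrhs : ∑ m, (if m = gg Nout s i then (1:ℂ) else 0) * κ' (m - j)
      = κ' (gg Nout s i - j) := by
    simp [ite_mul]
  rw [hrhs]
  by_cases hdvd : s ∣ j.val
  · obtain ⟨t, ht⟩ := hdvd
    have htlt : t < Nout := by
      have := ZMod.val_lt j
      rw [ht] at this
      exact lt_of_mul_lt_mul_left this (Nat.zero_le s)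
    set k₀ : ZMod Nout := (t : ZMod Nout) with hk₀
    have hval : k₀.val = t := ZMod.val_natCast_of_lt htlt
    have hj : j = gg Nout s k₀ := by
      have : j = ((j.val : ℕ) : ZMod (s * Nout)) := (ZMod.natCast_rightInverse j).symm
      rw [this, ht, gg, hval]
    have hiff : ∀ k : ZMod Nout, (j = gg Nout s k) ↔ k = k₀ := by
      intro k
      constructor
      · intro h; exact (gg_inj Nout s (hj ▸ h.symm))
      · rintro rfl; exact hj
    simp only [hiff, mul_ite, mul_one, mul_zero]
    rw [Finset.sum_ite_eq' Finset.univ k₀ (fun k => κ (i - k))]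
    simp only [Finset.mem_univ, if_true]
    rw [hj, gg_sub, hdil']
  · have hlhs : ∀ k : ZMod Nout, j ≠ gg Nout s k := by
      intro k h
      apply hdvd
      rw [h, val_gg]
      exact Dvd.intro _ rfl
    have hz : κ' (gg Nout s i - j) = 0 := by
      apply hzero
      intro hsd
      apply hdvd
      set d := gg Nout s i - j with hd
      have hj2 : j = gg Nout s i - d := by rw [hd]; ring
      have h1 : (((s * Nout : ℕ)) : ℤ) ∣ ((j.val : ℤ) - (((gg Nout s i).val : ℤ) - (d.val : ℤ))) := by
        rw [← ZMod.intCast_zmod_eq_zero_iff_dvd]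
        push_cast
        simp [ZMod.natCast_val, ZMod.cast_id, hj2]
      have h2 : (s : ℤ) ∣ (j.val : ℤ) := by
        have hs1 : (s : ℤ) ∣ ((j.val : ℤ) - (((gg Nout s i).val : ℤ) - (d.val : ℤ))) := by
          refine dvd_trans ?_ h1
          exact_mod_cast Dvd.intro Nout rfl
        have hs2 : (s : ℤ) ∣ ((gg Nout s i).val : ℤ) := by
          rw [val_gg]; push_cast; exact Dvd.intro _ rfl
        have hs3 : (s : ℤ) ∣ (d.val : ℤ) := by exact_mod_cast hsd
        have := dvd_add hs1 (dvd_sub hs2 hs3)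
        simpa using this
      exact_mod_cast h2
    rw [hz]
    apply Finset.sum_eq_zero
    intro k _
    simp [hlhs k]
end

section
/- With L the integer subsampling matrix by factor s (N_in = sN_out), dilation intertwines subsampling: for any f : ℤ/N_in → ℂ and kernel κ : ℤ/N_out → ℂ with dilation κ_{s⁻¹}, we have (Lf) ⋆ κ = L(f ⋆ κ_{s⁻¹}), where ⋆ denotes circular convolution on the respective cyclic groups. -/
/-- Circular convolution on ℤ/M: (f ⋆ g)(n) = Σ_m f(m) g(n - m). -/
noncomputable def cconvZ {M : ℕ} [NeZero M] (f g : ZMod M → ℂ) : ZMod M → ℂ :=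
  fun n => ∑ m : ZMod M, f m * g (n - m)

section aux
variable (Nout s : ℕ) [NeZero Nout] [NeZero s] [NeZero (s * Nout)]

lemma cast_mul_mod (x : ℕ) :
    ((s * (x % Nout) : ℕ) : ZMod (s * Nout)) = ((s * x : ℕ) : ZMod (s * Nout)) := by
  have h : s * x = s * (x % Nout) + (s * Nout) * (x / Nout) := by
    conv_lhs => rw [show x = x % Nout + Nout * (x / Nout) from (Nat.mod_add_div x Nout).symm]
    ring
  rw [h, Nat.cast_add, Nat.cast_mul (s * Nout), ZMod.natCast_self, zero_mul, add_zero]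

/-- the dilation embedding -/
noncomputable def phi (k : ZMod Nout) : ZMod (s * Nout) := ((s * k.val : ℕ) : ZMod (s * Nout))

lemma phi_add (a b : ZMod Nout) : phi Nout s (a + b) = phi Nout s a + phi Nout s b := by
  unfold phi
  rw [ZMod.val_add, cast_mul_mod, Nat.mul_add, Nat.cast_add]

lemma phi_sub (a b : ZMod Nout) : phi Nout s (a - b) = phi Nout s a - phi Nout s b := by
  have := phi_add Nout s (a - b) b
  rw [sub_add_cancel] at this
  rw [this]; ring

lemma phi_val (k : ZMod Nout) : (phi Nout s k).val = s * k.val := by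
  unfold phi
  rw [ZMod.val_natCast, Nat.mul_mod_mul_left, Nat.mod_eq_of_lt (ZMod.val_lt k)]

lemma dvd_phi_val (k : ZMod Nout) : s ∣ (phi Nout s k).val := ⟨k.val, phi_val Nout s k⟩

lemma dvd_of_dvd_sub {x m : ZMod (s * Nout)} (hx : s ∣ x.val) (hxm : s ∣ (x - m).val) :
    s ∣ m.val := by
  have h := ZMod.val_add (x - m) m
  rw [sub_add_cancel] at h
  have hM : s ∣ s * Nout := ⟨Nout, rfl⟩
  have h2 : ((x - m).val + m.val) % (s * Nout) % s = ((x - m).val + m.val) % s :=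
    Nat.mod_mod_of_dvd _ hM
  have h3 : s ∣ ((x - m).val + m.val) := by
    have h4 : (x - m).val + m.val
        = (s * Nout) * (((x - m).val + m.val) / (s * Nout)) + x.val := by
      conv_lhs => rw [← Nat.div_add_mod ((x - m).val + m.val) (s * Nout)]
      rw [← h]
    rw [h4]
    exact Nat.dvd_add (Dvd.dvd.mul_right ⟨Nout, rfl⟩ _) hx
  exact (Nat.dvd_add_right hxm).mp h3

end aux

/-- Dilation intertwines subsampling: with (Lf)(i) = f(si) the subsampling by
integer factor s (N_in = s·N_out) and κ_{s⁻¹} the s-dilation of κ,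
(Lf) ⋆ κ = L(f ⋆ κ_{s⁻¹}), convolutions taken in ℤ/N_out and ℤ/N_in respectively. -/
theorem subsample_conv_dilation (Nout s : ℕ)
    [NeZero Nout] [NeZero s] [NeZero (s * Nout)]
    (f : ZMod (s * Nout) → ℂ) (κ : ZMod Nout → ℂ) (κ' : ZMod (s * Nout) → ℂ)
    (hdil : ∀ i : ZMod Nout, κ' ((s * i.val : ℕ) : ZMod (s * Nout)) = κ i)
    (hzero : ∀ j : ZMod (s * Nout), ¬ (s ∣ j.val) → κ' j = 0) :
    cconvZ (fun i : ZMod Nout => f ((s * i.val : ℕ) : ZMod (s * Nout))) κ =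
      fun i : ZMod Nout => cconvZ f κ' ((s * i.val : ℕ) : ZMod (s * Nout)) := by
  funext i
  show ∑ m : ZMod Nout, f (phi Nout s m) * κ (i - m)
      = ∑ m : ZMod (s * Nout), f m * κ' (phi Nout s i - m)
  have hs : 0 < s := Nat.pos_of_ne_zero (NeZero.ne s)
  rw [← Finset.sum_subset (Finset.subset_univ
      (Finset.univ.filter (fun m : ZMod (s * Nout) => s ∣ m.val)))
      (fun m _ hm => by
        simp only [Finset.mem_filter, Finset.mem_univ, true_and] at hm
        have : ¬ s ∣ (phi Nout s i - m).val := fun hd =>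
          hm (dvd_of_dvd_sub Nout s (dvd_phi_val Nout s i) hd)
        rw [hzero _ this, mul_zero])]
  refine Finset.sum_nbij' (fun k => phi Nout s k)
    (fun m => ((m.val / s : ℕ) : ZMod Nout)) ?_ ?_ ?_ ?_ ?_
  · intro k _
    simp only [Finset.mem_filter, Finset.mem_univ, true_and]
    exact dvd_phi_val Nout s k
  · intro m _; exact Finset.mem_univ _
  · intro k _
    rw [phi_val, Nat.mul_div_cancel_left _ hs]
    simp [ZMod.natCast_val, ZMod.cast_id]
  · intro m hm
    simp only [Finset.mem_filter, Finset.mem_univ, true_and] at hm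
    obtain ⟨r, hr⟩ := hm
    have hrlt : r < Nout := by
      have := ZMod.val_lt m
      rw [hr] at this
      exact lt_of_mul_lt_mul_left this (Nat.le_of_lt hs)
    rw [hr, Nat.mul_div_cancel_left _ hs]
    unfold phi
    rw [ZMod.val_natCast, Nat.mod_eq_of_lt hrlt, ← hr]
    simp [ZMod.natCast_val, ZMod.cast_id]
  · intro k _
    rw [← phi_sub, ← hdil (i - k)]
    rfl
end

section
/- If A, B, C, D are complex matrices of compatible sizes and A F Bᵀ = C F Dᵀ holds for all matrices F, then there exists λ ∈ ℂ with A = λC and Bᵀ = λ⁻¹Dᵀ, provided C ≠ 0 and D ≠ 0. -/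
open Matrix

lemma mul_std_mul_apply {m n p q : ℕ} (A : Matrix (Fin m) (Fin n) ℂ)
    (B : Matrix (Fin p) (Fin q) ℂ) (i : Fin m) (j : Fin n) (k : Fin p) (l : Fin q) :
    (A * Matrix.single j l (1:ℂ) * Bᵀ) i k = A i j * B k l := by
  simp [Matrix.mul_apply, Matrix.single, transpose_apply, Finset.sum_mul,
    ite_and, mul_comm]

/-- Rank-one decoupling lemma: if A F Bᵀ = C F Dᵀ for all matrices F, with C ≠ 0 and
D ≠ 0, then there is λ ∈ ℂ with A = λ C and Bᵀ = λ⁻¹ Dᵀ. -/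
theorem rank_one_decoupling (m n p q : ℕ)
    (A C : Matrix (Fin m) (Fin n) ℂ) (B D : Matrix (Fin p) (Fin q) ℂ)
    (hC : C ≠ 0) (hD : D ≠ 0)
    (h : ∀ F : Matrix (Fin n) (Fin q) ℂ, A * F * Bᵀ = C * F * Dᵀ) :
    ∃ lam : ℂ, lam ≠ 0 ∧ A = lam • C ∧ Bᵀ = lam⁻¹ • Dᵀ := by
  have key : ∀ (i : Fin m) (j : Fin n) (k : Fin p) (l : Fin q),
      A i j * B k l = C i j * D k l := by
    intro i j k l
    have := congrFun (congrFun (h (Matrix.single j l 1)) i) k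
    rwa [mul_std_mul_apply, mul_std_mul_apply] at this
  obtain ⟨i0, j0, hC0⟩ : ∃ i j, C i j ≠ 0 := by
    by_contra hcon
    push_neg at hcon
    exact hC (by ext i j; simp [hcon i j])
  obtain ⟨k0, l0, hD0⟩ : ∃ k l, D k l ≠ 0 := by
    by_contra hcon
    push_neg at hcon
    exact hD (by ext k l; simp [hcon k l])
  have h0 := key i0 j0 k0 l0
  have hB0 : B k0 l0 ≠ 0 := by
    intro hb
    exact (mul_ne_zero hC0 hD0) (by rw [← h0, hb, mul_zero])
  have hA0 : A i0 j0 ≠ 0 := by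
    intro ha
    exact (mul_ne_zero hC0 hD0) (by rw [← h0, ha, zero_mul])
  refine ⟨D k0 l0 / B k0 l0, div_ne_zero hD0 hB0, ?_, ?_⟩
  · ext i j
    have hk := key i j k0 l0
    simp only [Matrix.smul_apply, smul_eq_mul]
    field_simp
    linear_combination hk
  · have hlam : (D k0 l0 / B k0 l0)⁻¹ = C i0 j0 / A i0 j0 := by
      rw [inv_div, div_eq_div_iff hD0 hA0]
      linear_combination h0
    ext l k
    rw [hlam]
    have hk := key i0 j0 k l
    simp only [Matrix.smul_apply, transpose_apply, smul_eq_mul]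
    field_simp
    linear_combination hk
end
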